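/- Lemma 3.4 (concentration of the exponential mechanism around the constrained minimizer under strong convexity). There is a universal constant c > 0 such that the following holds. Let C ⊆ ℝ^p be a compact convex set with diameter ‖C‖ > 0 and positive Lebesgue measure, let F : C → ℝ be m-strongly convex and L-Lipschitz on C, let θ* be the minimizer of F over C, fix ε > 0 and n ≥ 1, and let μ be the Gibbs measure on C with density proportional to exp(−(εn/(2L‖C‖))·F(θ)). Then for every t ≥ 0, μ({θ ∈ C : ‖θ − θ*‖ ≤ sqrt(c·L(p + t)‖C‖/(m ε n))}) ≥ 1 − 2^{−t}. -/

import Mathlib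

open MeasureTheory Real
open scoped ENNReal NNReal

set_option maxHeartbeats 1000000
noncomputable section

/-- ℝ^p as a Euclidean space. -/
abbrev Eu (p : ℕ) := EuclideanSpace ℝ (Fin p)

/-- The Gibbs measure on `C` with inverse temperature `β` for the potential `F`:
the probability measure whose density with respect to Lebesgue measure restricted
to `C` is proportional to `exp (-β * F θ)`. -/
def gibbs {p : ℕ} (C : Set (Eu p)) (β : ℝ) (F : Eu p → ℝ) : Measure (Eu p) :=
  (∫⁻ θ in C, ENNReal.ofReal (Real.exp (-β * F θ)))⁻¹ •
    (volume.restrict C).withDensity fun θ => ENNReal.ofReal (Real.exp (-β * F θ))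

/-- Lemma 3.4: concentration of the exponential mechanism around the
constrained minimizer of an `m`-strongly convex, `L`-Lipschitz loss. -/
theorem exponential_mechanism_concentration_strongly_convex :
    ∃ c : ℝ, 0 < c ∧
      ∀ (p n : ℕ), 1 ≤ p → 1 ≤ n →
      ∀ (C : Set (Eu p)), IsCompact C → Convex ℝ C →
        0 < Metric.diam C → 0 < volume C →
      ∀ (F : Eu p → ℝ) (m : ℝ), 0 < m →
        -- `m`-strong convexity of `F` on `C`: `F - (m/2)‖·‖²` is convex on `C`
        ConvexOn ℝ C (fun θ => F θ - m / 2 * ‖θ‖ ^ 2) →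
      ∀ (L : ℝ), 0 < L → LipschitzOnWith L.toNNReal F C →
      ∀ (θstar : Eu p), θstar ∈ C → (∀ θ ∈ C, F θstar ≤ F θ) →
      ∀ (ε : ℝ), 0 < ε →
      ∀ (t : ℝ), 0 ≤ t →
        1 - ENNReal.ofReal ((2 : ℝ) ^ (-t)) ≤
          gibbs C (ε * n / (2 * L * Metric.diam C)) F
            {θ | θ ∈ C ∧
              ‖θ - θstar‖ ≤ Real.sqrt (c * L * (p + t) * Metric.diam C / (m * ε * n))} := by
  refine ⟨32, by norm_num, ?_⟩
  intro p n hp hn C hComp hConv hdiam hvolC F m hm hconv L hL hlip θstar hθstar hmin ε hε t ht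
  set D := Metric.diam C with hD
  set β := ε * n / (2 * L * D) with hβdef
  have hn' : (1:ℝ) ≤ (n:ℝ) := by exact_mod_cast hn
  have hp' : (1:ℝ) ≤ (p:ℝ) := by exact_mod_cast hp
  have hεn : 0 < ε * n := by positivity
  have hβ : 0 < β := by apply div_pos hεn; positivity
  set Fstar := F θstar with hFstar
  set w : Eu p → ℝ≥0∞ := fun θ => ENNReal.ofReal (Real.exp (-β * F θ)) with hw
  set Z := ∫⁻ θ in C, w θ with hZ
  set r := Real.sqrt (32 * L * (p + t) * D / (m * ε * n)) with hr
  set S := {θ | θ ∈ C ∧ ‖θ - θstar‖ ≤ r} with hS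
  set b := (2 * p + t + 2) * Real.log 2 with hb
  have hb_pos : 0 < b := by
    apply mul_pos; · positivity
    · exact Real.log_pos (by norm_num)
  set γ := b / β with hγdef
  have hγ : 0 < γ := div_pos hb_pos hβ
  have hC_meas : MeasurableSet C := hComp.isClosed.measurableSet
  have hvolC_fin : volume C < ⊤ := hComp.measure_lt_top
  have hFcont : ContinuousOn F C := hlip.continuousOn
  -- the key strong-convexity combination inequality
  have hkey : ∀ θ ∈ C, ∀ l : ℝ, 0 ≤ l → l ≤ 1 →
      F (l • θ + (1-l) • θstar) ≤ l * F θ + (1-l) * Fstar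
        - m/2 * (l * (1-l) * ‖θ - θstar‖^2) := by
    intro a ha l hl hl1
    have hcomb := hconv.2 ha hθstar hl (by linarith : (0:ℝ) ≤ 1 - l) (by ring)
    simp only [smul_eq_mul] at hcomb
    have hid : ‖l • a + (1-l) • θstar‖^2
        = l*‖a‖^2 + (1-l)*‖θstar‖^2 - l*(1-l)*‖a-θstar‖^2 := by
      have h1 := @norm_add_sq_real _ _ _ (l • a) ((1-l) • θstar)
      have h2 := @norm_sub_sq_real _ _ _ a θstar
      have h3 : ‖l • a‖ = l * ‖a‖ := by rw [norm_smul]; simp [abs_of_nonneg hl]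
      have h4 : ‖(1-l) • θstar‖ = (1-l) * ‖θstar‖ := by
        rw [norm_smul]; simp [abs_of_nonneg (by linarith : (0:ℝ) ≤ 1-l)]
      have h5 : inner ℝ (l • a) ((1-l) • θstar) = l * ((1-l) * (inner ℝ a θstar : ℝ)) := by
        rw [real_inner_smul_left, real_inner_smul_right]
      rw [h3, h4, h5] at h1
      rw [h1, h2]; ring
    rw [hid] at hcomb
    linarith
  have hmem_comb : ∀ θ ∈ C, ∀ l : ℝ, 0 ≤ l → l ≤ 1 → (l • θ + (1-l) • θstar) ∈ C := by
    intro θ hθ l hl0 hl1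
    exact hConv hθ hθstar hl0 (by linarith) (by ring)
  -- quadratic growth around θstar
  have hgrow : ∀ θ ∈ C, Fstar + m/2 * ‖θ - θstar‖^2 ≤ F θ := by
    intro θ hθ
    set d := ‖θ - θstar‖ with hd
    have H : ∀ η : ℝ, 0 < η → Fstar + m/2*d^2 ≤ F θ + η := by
      intro η hη
      set l : ℝ := min (1/2) (η/(m/2*d^2+1)) with hl
      have hq : 0 < m/2*d^2+1 := by positivity
      have hl0 : 0 < l := lt_min (by norm_num) (by positivity)
      have hl1 : l ≤ 1 := le_trans (min_le_left _ _) (by norm_num)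
      have h2 := hkey θ hθ l hl0.le hl1
      have h2' := hmin _ (hmem_comb θ hθ l hl0.le hl1)
      have h3 : m/2 * ((1-l)*d^2) ≤ F θ - Fstar := by nlinarith [hl0]
      have h4 : l * (m/2*d^2) ≤ η := by
        have hle : l ≤ η/(m/2*d^2+1) := min_le_right _ _
        have h6 := mul_le_mul_of_nonneg_right hle (by positivity : (0:ℝ) ≤ m/2*d^2)
        calc l * (m/2*d^2) ≤ η/(m/2*d^2+1) * (m/2*d^2) := h6
          _ ≤ η := by
            rw [div_mul_eq_mul_div, div_le_iff₀ hq]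
            nlinarith
      nlinarith
    by_contra hcon
    push_neg at hcon
    have := H ((Fstar + m/2*d^2 - F θ)/2) (by linarith)
    linarith
  -- Lipschitz upper bound
  have hub : ∀ θ ∈ C, F θ ≤ Fstar + L * D := by
    intro θ hθ
    have h1 := hlip.dist_le_mul θ hθ θstar hθstar
    rw [Real.coe_toNNReal L hL.le] at h1
    have h2 : dist θ θstar ≤ D := Metric.dist_le_diam_of_mem hComp.isBounded hθ hθstar
    have h3 : |F θ - Fstar| ≤ L * D := by
      rw [Real.dist_eq] at h1
      calc |F θ - Fstar| ≤ L * dist θ θstar := h1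
        _ ≤ L * D := by nlinarith
    have := abs_le.1 h3
    linarith [this.2]
  -- the sublevel sets
  set A : ℕ → Set (Eu p) := fun j => {θ ∈ C | F θ ≤ Fstar + j * γ} with hA
  have hA_sub : ∀ j, A j ⊆ C := fun j θ hθ => hθ.1
  have hA_meas : ∀ j, MeasurableSet (A j) := by
    intro j
    have : IsClosed (C ∩ F ⁻¹' (Set.Iic (Fstar + j * γ))) :=
      hFcont.preimage_isClosed_of_isClosed hComp.isClosed isClosed_Iic
    exact this.measurableSet
  -- homothety
  have hhom_eq : ∀ (l : ℝ) (θ : Eu p),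
      AffineMap.homothety θstar l θ = l • θ + (1-l) • θstar := by
    intro l θ
    rw [AffineMap.homothety_apply]
    simp only [vsub_eq_sub, vadd_eq_add, smul_sub]
    module
  have hhomvol : ∀ (ρ : ℝ) (s : Set (Eu p)),
      volume (AffineMap.homothety θstar ρ '' s) = ENNReal.ofReal (|ρ ^ p|) * volume s := by
    intro ρ s
    rw [Measure.addHaar_image_homothety, finrank_euclideanSpace_fin]
  have hhom : ∀ (k : ℕ), 1 ≤ k → ∀ θ ∈ A k,
      AffineMap.homothety θstar ((k:ℝ)⁻¹) θ ∈ A 1 := by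
    intro k hk θ hθ
    obtain ⟨hθC, hθF⟩ := hθ
    have hkpos : (0:ℝ) < k := by exact_mod_cast hk
    have hk1 : (1:ℝ) ≤ k := by exact_mod_cast hk
    set l : ℝ := (k:ℝ)⁻¹ with hldef
    have hl0 : 0 ≤ l := by positivity
    have hl1 : l ≤ 1 := by rw [hldef]; exact inv_le_one_of_one_le₀ hk1
    rw [hhom_eq]
    refine ⟨hmem_comb θ hθC l hl0 hl1, ?_⟩
    have h1 := hkey θ hθC l hl0 hl1
    have h2 : l * F θ ≤ l * (Fstar + k * γ) := by
      apply mul_le_mul_of_nonneg_left hθF hl0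
    have h3 : l * (k * γ) = γ := by
      rw [hldef]; field_simp
    have h4 : 0 ≤ m/2 * (l * (1-l) * ‖θ - θstar‖^2) := by
      have : 0 ≤ l * (1-l) := mul_nonneg hl0 (by linarith)
      positivity
    push_cast
    nlinarith
  have hA1_pos : 0 < volume (A 1) := by
    set l0 : ℝ := min 1 (γ/(L*D)) with hl0def
    have hl00 : 0 < l0 := lt_min one_pos (by positivity)
    have hl01 : l0 ≤ 1 := min_le_left _ _
    have himg : AffineMap.homothety θstar l0 '' C ⊆ A 1 := by
      rintro x ⟨θ, hθ, rfl⟩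
      rw [hhom_eq]
      refine ⟨hmem_comb θ hθ l0 hl00.le hl01, ?_⟩
      have h1 := hkey θ hθ l0 hl00.le hl01
      have h2 : F θ - Fstar ≤ L * D := by linarith [hub θ hθ]
      have h2' : 0 ≤ F θ - Fstar := by linarith [hmin θ hθ]
      have h3 : l0 * (F θ - Fstar) ≤ γ := by
        calc l0 * (F θ - Fstar) ≤ (γ/(L*D)) * (F θ - Fstar) :=
              mul_le_mul_of_nonneg_right (min_le_right _ _) h2'
          _ ≤ (γ/(L*D)) * (L*D) := by
              apply mul_le_mul_of_nonneg_left h2 (by positivity)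
          _ = γ := by field_simp
      have h4 : 0 ≤ m/2 * (l0 * (1-l0) * ‖θ - θstar‖^2) := by
        have : 0 ≤ l0 * (1-l0) := mul_nonneg hl00.le (by linarith)
        positivity
      push_cast
      nlinarith
    calc (0:ℝ≥0∞) < ENNReal.ofReal (|l0 ^ p|) * volume C := by
          refine ENNReal.mul_pos ?_ hvolC.ne'
          simp only [ne_eq, ENNReal.ofReal_eq_zero, not_le]
          positivity
      _ = volume (AffineMap.homothety θstar l0 '' C) := (hhomvol l0 C).symm
      _ ≤ volume (A 1) := measure_mono himg
  have hA1_fin : volume (A 1) < ⊤ := lt_of_le_of_lt (measure_mono (hA_sub 1)) hvolC_fin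
  have hAk_le : ∀ k : ℕ, 1 ≤ k →
      volume (A k) ≤ ENNReal.ofReal ((k:ℝ)^p) * volume (A 1) := by
    intro k hk
    have hkpos : (0:ℝ) < k := by exact_mod_cast hk
    have h1 : AffineMap.homothety θstar ((k:ℝ)⁻¹) '' A k ⊆ A 1 := by
      rintro x ⟨θ, hθ, rfl⟩
      exact hhom k hk θ hθ
    have h3 : ENNReal.ofReal (((k:ℝ)⁻¹)^p) * volume (A k) ≤ volume (A 1) := by
      have h2 := hhomvol ((k:ℝ)⁻¹) (A k)
      rw [abs_of_nonneg (by positivity : (0:ℝ) ≤ ((k:ℝ)⁻¹)^p)] at h2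
      rw [← h2]
      exact measure_mono h1
    calc volume (A k)
        = ENNReal.ofReal ((k:ℝ)^p) * (ENNReal.ofReal (((k:ℝ)⁻¹)^p) * volume (A k)) := by
          rw [← mul_assoc, ← ENNReal.ofReal_mul (by positivity)]
          rw [show (k:ℝ)^p * ((k:ℝ)⁻¹)^p = 1 by
            rw [← mul_pow, mul_inv_cancel₀ hkpos.ne', one_pow]]
          rw [ENNReal.ofReal_one, one_mul]
      _ ≤ ENNReal.ofReal ((k:ℝ)^p) * volume (A 1) := by
          exact mul_le_mul_right h3 _
  -- bounds on Z
  have hZ_ge : ENNReal.ofReal (Real.exp (-β * (Fstar + γ))) * volume (A 1) ≤ Z := by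
    calc ENNReal.ofReal (Real.exp (-β * (Fstar + γ))) * volume (A 1)
        = ∫⁻ _ in A 1, ENNReal.ofReal (Real.exp (-β * (Fstar + γ))) := by
          rw [setLIntegral_const]
      _ ≤ ∫⁻ θ in A 1, w θ := by
          apply setLIntegral_mono' (hA_meas 1)
          intro θ hθ
          apply ENNReal.ofReal_le_ofReal
          apply Real.exp_le_exp.2
          have h1 : F θ ≤ Fstar + γ := by
            have := hθ.2; push_cast at this; linarith
          nlinarith
      _ ≤ Z := lintegral_mono_set (hA_sub 1)
  have hZ_pos : 0 < Z := by
    refine lt_of_lt_of_le ?_ hZ_ge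
    exact ENNReal.mul_pos (by simp [Real.exp_pos]) hA1_pos.ne'
  have hZ_fin : Z < ⊤ := by
    have h1 : Z ≤ ENNReal.ofReal (Real.exp (-β * Fstar)) * volume C := by
      calc Z ≤ ∫⁻ _ in C, ENNReal.ofReal (Real.exp (-β * Fstar)) := by
            apply setLIntegral_mono' hC_meas
            intro θ hθ
            apply ENNReal.ofReal_le_ofReal
            apply Real.exp_le_exp.2
            nlinarith [hmin θ hθ]
        _ = ENNReal.ofReal (Real.exp (-β * Fstar)) * volume C := setLIntegral_const _ _
    exact lt_of_le_of_lt h1 (ENNReal.mul_lt_top ENNReal.ofReal_lt_top hvolC_fin)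
  have hν : ∀ X : Set (Eu p), MeasurableSet X → X ⊆ C →
      gibbs C β F X = Z⁻¹ * ∫⁻ θ in X, w θ := by
    intro X hX hXC
    rw [gibbs, Measure.smul_apply, smul_eq_mul, withDensity_apply _ hX,
      Measure.restrict_restrict hX, Set.inter_eq_self_of_subset_left hXC]
  have hνC : gibbs C β F C = 1 := by
    rw [hν C hC_meas subset_rfl]
    exact ENNReal.inv_mul_cancel hZ_pos.ne' hZ_fin.ne
  -- tail bound
  have htail : gibbs C β F (C \ S) ≤ ENNReal.ofReal ((2:ℝ) ^ (-t)) := by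
    set x : ℝ := (2:ℝ)^(-(t+2)) with hxdef
    have hx0 : 0 < x := Real.rpow_pos_of_pos two_pos _
    set q : ℝ≥0∞ := ENNReal.ofReal x with hqdef
    have h2inv : (2:ℝ)^(-(2:ℝ)) = 1/4 := by
      rw [show (-(2:ℝ)) = ((-2 : ℤ) : ℝ) by norm_num, Real.rpow_intCast]; norm_num
    have hrsq : r^2 = 32 * L * (↑p + t) * D / (m * ε * ↑n) := Real.sq_sqrt (by positivity)
    have hγLD : γ = b * (2*L*D) / (ε*↑n) := by rw [hγdef, hβdef]; field_simp
    have hlog2 : Real.log 2 ≤ 0.7 := by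
      have := Real.log_two_lt_d9; linarith
    have hr2γ : 2*γ ≤ m/2 * r^2 := by
      rw [hrsq, hγLD]
      have h1 : m/2 * (32 * L * (↑p + t) * D / (m * ε * ↑n)) = 16*L*((p:ℝ)+t)*D/(ε*↑n) := by
        field_simp; ring
      have h1' : 2*(b * (2*L*D) / (ε*↑n)) = 4*b*L*D/(ε*↑n) := by ring
      rw [h1, h1', div_le_div_iff₀ (by positivity) (by positivity)]
      have hblin : b ≤ 0.7*(2*(p:ℝ)+t+2) := by
        rw [hb]
        calc (2*(p:ℝ)+t+2) * Real.log 2 ≤ (2*(p:ℝ)+t+2) * 0.7 :=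
              mul_le_mul_of_nonneg_left hlog2 (by linarith)
          _ = 0.7*(2*(p:ℝ)+t+2) := by ring
      have h3 : 4*b ≤ 16*((p:ℝ)+t) := by nlinarith
      nlinarith [mul_le_mul_of_nonneg_right h3 (mul_pos hL hdiam).le,
        mul_pos (mul_pos hL hdiam) hεn]
    have hcover : C \ S ⊆ ⋃ j : ℕ, (A (j+3) \ A (j+2)) := by
      intro θ hθ
      obtain ⟨hθC, hθS⟩ := hθ
      have hdgt : r < ‖θ - θstar‖ := by
        by_contra h; push_neg at h; exact hθS ⟨hθC, h⟩
      have hg2 : Fstar + 2*γ < F θ := by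
        have h1 := hgrow θ hθC
        have h2 : r^2 < ‖θ - θstar‖^2 :=
          pow_lt_pow_left₀ hdgt (Real.sqrt_nonneg _) (by norm_num)
        nlinarith
      have hgub : F θ - Fstar ≤ L * D := by linarith [hub θ hθC]
      have hgpos : 0 < F θ - Fstar := by nlinarith [hγ]
      set g := F θ - Fstar with hgdef
      set k := ⌈g/γ⌉₊ with hkdef
      have hk3 : 3 ≤ k := by
        have h5 : (2:ℝ) < g/γ := by rw [lt_div_iff₀ hγ]; linarith
        have h6 : 2 < k := Nat.lt_ceil.2 (by push_cast; linarith)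
        omega
      have hgk : g ≤ k * γ := by
        have h7 := Nat.le_ceil (g/γ)
        rw [div_le_iff₀ hγ] at h7
        linarith
      have hgk1 : ((k:ℝ) - 1) * γ < g := by
        have h7 : (k:ℝ) < g/γ + 1 := Nat.ceil_lt_add_one (div_nonneg hgpos.le hγ.le)
        have h8 : (k:ℝ) - 1 < g/γ := by linarith
        calc ((k:ℝ)-1)*γ < (g/γ)*γ := mul_lt_mul_of_pos_right h8 hγ
          _ = g := by field_simp
      refine Set.mem_iUnion.2 ⟨k-3, ?_, ?_⟩
      · refine ⟨hθC, ?_⟩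
        rw [show k-3+3 = k from by omega]
        linarith
      · intro hmem
        obtain ⟨-, h10⟩ := hmem
        have h11 : (↑(k-3+2):ℝ) = (k:ℝ) - 1 := by
          rw [show k-3+2 = k-1 from by omega]
          push_cast [Nat.cast_sub (show 1 ≤ k from by omega)]
          ring
        rw [h11] at h10
        linarith
    have hpow : ∀ j : ℕ, q^(j+1) = ENNReal.ofReal (x^(j+1)) := fun j =>
      (ENNReal.ofReal_pow hx0.le _).symm
    have hreal : ∀ j : ℕ, Real.exp (-β*(Fstar+((j:ℝ)+2)*γ)) * ((j:ℝ)+3)^p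
        ≤ Real.exp (-β*(Fstar+γ)) * x^(j+1) := by
      intro j
      have hexpb : Real.exp (-b) = (2:ℝ)^(-(2*(p:ℝ)+t+2)) := by
        rw [Real.rpow_def_of_pos two_pos]
        congr 1; rw [hb]; push_cast; ring
      have hxsplit : x = Real.exp (-b) * (2:ℝ)^(2*p : ℕ) := by
        rw [hexpb, ← Real.rpow_natCast 2 (2*p), ← Real.rpow_add two_pos, hxdef]
        congr 1; push_cast; ring
      have hbγ : β * γ = b := by
        rw [hγdef]; field_simp
      have hsplit2 : -β*(Fstar+((j:ℝ)+2)*γ) = -β*(Fstar+γ) + (-((j:ℝ)+1)*b) := by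
        linear_combination (-(j:ℝ)-1) * hbγ
      rw [hsplit2, Real.exp_add, mul_assoc, hxsplit]
      apply mul_le_mul_of_nonneg_left _ (Real.exp_pos _).le
      have hexp : Real.exp (-((j:ℝ)+1)*b) = Real.exp (-b) ^ (j+1) := by
        rw [← Real.exp_nat_mul]; congr 1; push_cast; ring
      rw [hexp, mul_pow]
      apply mul_le_mul_of_nonneg_left _ (pow_nonneg (Real.exp_pos _).le _)
      have hnat : (j+3)^p ≤ (2^(2*p))^(j+1) := by
        calc (j+3)^p ≤ (2^(2*(j+1)))^p := by
              apply Nat.pow_le_pow_left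
              calc j+3 ≤ 2^(j+2) := by
                    have h1 : j+2 < 2^(j+2) := Nat.lt_two_pow_self; omega
                _ ≤ 2^(2*(j+1)) := Nat.pow_le_pow_right (by norm_num) (by omega)
          _ = (2^(2*p))^(j+1) := by
              rw [← pow_mul, ← pow_mul]
              congr 1
              ring
      exact_mod_cast hnat
    have hone : Z⁻¹ * (ENNReal.ofReal (Real.exp (-β*(Fstar+γ))) * volume (A 1)) ≤ 1 := by
      calc Z⁻¹ * (ENNReal.ofReal (Real.exp (-β*(Fstar+γ))) * volume (A 1))
          ≤ Z⁻¹ * Z := by gcongr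
        _ ≤ 1 := by
          rw [ENNReal.inv_mul_cancel hZ_pos.ne' hZ_fin.ne]
    have hterm : ∀ j : ℕ, gibbs C β F (A (j+3) \ A (j+2)) ≤ q^(j+1) := by
      intro j
      have hEmeas := (hA_meas (j+3)).diff (hA_meas (j+2))
      have hEC : A (j+3) \ A (j+2) ⊆ C := Set.diff_subset.trans (hA_sub _)
      rw [hν _ hEmeas hEC]
      have hwub : ∀ θ ∈ A (j+3) \ A (j+2),
          w θ ≤ ENNReal.ofReal (Real.exp (-β*(Fstar+((j:ℝ)+2)*γ))) := by
        intro θ hθ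
        have hθC : θ ∈ C := hEC hθ
        have h1 : Fstar + ((j:ℝ)+2)*γ ≤ F θ := by
          by_contra h
          push_neg at h
          exact hθ.2 ⟨hθC, by push_cast; linarith⟩
        apply ENNReal.ofReal_le_ofReal
        apply Real.exp_le_exp.2
        nlinarith
      have hint : (∫⁻ θ in A (j+3) \ A (j+2), w θ)
          ≤ ENNReal.ofReal (Real.exp (-β*(Fstar+((j:ℝ)+2)*γ))) * volume (A (j+3)) := by
        calc (∫⁻ θ in A (j+3) \ A (j+2), w θ)
            ≤ ∫⁻ _ in A (j+3) \ A (j+2), ENNReal.ofReal (Real.exp (-β*(Fstar+((j:ℝ)+2)*γ))) :=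
              setLIntegral_mono' hEmeas hwub
          _ = ENNReal.ofReal (Real.exp (-β*(Fstar+((j:ℝ)+2)*γ))) * volume (A (j+3) \ A (j+2)) :=
              setLIntegral_const _ _
          _ ≤ _ := mul_le_mul_right (measure_mono Set.diff_subset) _
      have hvolA : volume (A (j+3)) ≤ ENNReal.ofReal (((j:ℝ)+3)^p) * volume (A 1) := by
        have h5 := hAk_le (j+3) (by omega)
        have h6 : ((j+3 : ℕ) : ℝ) = (j:ℝ)+3 := by push_cast; ring
        rwa [h6] at h5
      calc Z⁻¹ * (∫⁻ θ in A (j+3) \ A (j+2), w θ)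
          ≤ Z⁻¹ * (ENNReal.ofReal (Real.exp (-β*(Fstar+((j:ℝ)+2)*γ)))
              * (ENNReal.ofReal (((j:ℝ)+3)^p) * volume (A 1))) := by
            refine mul_le_mul_right (hint.trans ?_) _
            exact mul_le_mul_right hvolA _
        _ = Z⁻¹ * (ENNReal.ofReal (Real.exp (-β*(Fstar+((j:ℝ)+2)*γ)) * ((j:ℝ)+3)^p)
              * volume (A 1)) := by
            rw [ENNReal.ofReal_mul (Real.exp_pos _).le, mul_assoc]
        _ ≤ Z⁻¹ * (ENNReal.ofReal (Real.exp (-β*(Fstar+γ)) * x^(j+1)) * volume (A 1)) :=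
            mul_le_mul_right (mul_le_mul_left (ENNReal.ofReal_le_ofReal (hreal j)) _) _
        _ = (Z⁻¹ * (ENNReal.ofReal (Real.exp (-β*(Fstar+γ))) * volume (A 1))) * q^(j+1) := by
            rw [hpow j, ENNReal.ofReal_mul (Real.exp_pos _).le]
            ring
        _ ≤ 1 * q^(j+1) := mul_le_mul_left hone _
        _ = q^(j+1) := one_mul _
    calc gibbs C β F (C \ S) ≤ gibbs C β F (⋃ j : ℕ, (A (j+3) \ A (j+2))) :=
          measure_mono hcover
      _ ≤ ∑' j : ℕ, gibbs C β F (A (j+3) \ A (j+2)) := measure_iUnion_le _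
      _ ≤ ∑' j : ℕ, q^(j+1) := ENNReal.tsum_le_tsum hterm
      _ = q * (1 - q)⁻¹ := ENNReal.tsum_geometric_add_one q
      _ ≤ ENNReal.ofReal ((2:ℝ)^(-t)) := by
        have hq14 : q ≤ ENNReal.ofReal (1/4) := by
          apply ENNReal.ofReal_le_ofReal
          rw [hxdef]
          calc (2:ℝ)^(-(t+2)) ≤ (2:ℝ)^(-(2:ℝ)) :=
                Real.rpow_le_rpow_of_exponent_le (by norm_num) (by linarith)
            _ = 1/4 := h2inv
        have h34 : ENNReal.ofReal (3/4) ≤ 1 - q := by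
          rw [show (1:ℝ≥0∞) = ENNReal.ofReal 1 from by simp]
          calc ENNReal.ofReal (3/4) = ENNReal.ofReal 1 - ENNReal.ofReal (1/4) := by
                rw [← ENNReal.ofReal_sub _ (by norm_num)]; norm_num
            _ ≤ ENNReal.ofReal 1 - q := tsub_le_tsub_left hq14 _
        have hinv : (1 - q)⁻¹ ≤ ENNReal.ofReal (4/3) := by
          calc (1-q)⁻¹ ≤ (ENNReal.ofReal (3/4))⁻¹ := ENNReal.inv_le_inv' h34
            _ = ENNReal.ofReal (4/3) := by
              rw [← ENNReal.ofReal_inv_of_pos (by norm_num)]; norm_num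
        calc q * (1-q)⁻¹ ≤ ENNReal.ofReal x * ENNReal.ofReal (4/3) :=
              mul_le_mul' le_rfl hinv
          _ = ENNReal.ofReal (x * (4/3)) := (ENNReal.ofReal_mul hx0.le).symm
          _ ≤ ENNReal.ofReal ((2:ℝ)^(-t)) := by
            apply ENNReal.ofReal_le_ofReal
            have hxeq : x = (2:ℝ)^(-t) * (2:ℝ)^(-(2:ℝ)) := by
              rw [hxdef, ← Real.rpow_add two_pos]; ring_nf
            rw [hxeq, h2inv]
            nlinarith [Real.rpow_pos_of_pos (show (0:ℝ)<2 from by norm_num) (-t)]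

  -- conclusion
  have hsplit : (1:ℝ≥0∞) ≤ gibbs C β F S + gibbs C β F (C \ S) := by
    rw [← hνC]
    refine le_trans (measure_mono ?_) (measure_union_le S (C \ S))
    intro θ hθ
    by_cases h : θ ∈ S
    · exact Set.mem_union_left _ h
    · exact Set.mem_union_right _ ⟨hθ, h⟩
  rw [tsub_le_iff_right]
  calc (1:ℝ≥0∞) ≤ gibbs C β F S + gibbs C β F (C \ S) := hsplit
    _ ≤ gibbs C β F S + ENNReal.ofReal ((2:ℝ)^(-t)) := by gcongr

end
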